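/- arXiv:1306.0108 — 3 statements merged into one kernel-verified Lean document; each statement's English description precedes it below -/
import Mathlib

section
/- Let I be an ideal of a ring R. Then the following are equivalent: (1) R/I is strongly P-clean; (2) R/Iⁿ is strongly P-clean for some positive integer n; (3) R/Iⁿ is strongly P-clean for all positive integers n. -/
/-- An element `a` of a ring is strongly nilpotent if every sequence
`a = a₀, a₁, a₂, …` with `a_{i+1} ∈ a_i R a_i` is eventually zero. -/
def IsStronglyNilpotent {R : Type*} [Ring R] (a : R) : Prop :=
  ∀ f : ℕ → R, f 0 = a → (∀ i, ∃ r : R, f (i + 1) = f i * r * f i) → ∃ n, f n = 0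

/-- The prime radical `P(R)`: the set of strongly nilpotent elements
(equivalently, the intersection of all prime ideals). -/
def primeRadical (R : Type*) [Ring R] : Set R :=
  {a | IsStronglyNilpotent a}

/-- An element is strongly P-clean if it is the sum of an idempotent and an
element of the prime radical that commute. -/
def IsStronglyPClean {R : Type*} [Ring R] (x : R) : Prop :=
  ∃ e w : R, IsIdempotentElem e ∧ w ∈ primeRadical R ∧ x = e + w ∧ e * w = w * e

/-- A ring is strongly P-clean if each of its elements is strongly P-clean. -/
def StronglyPCleanRing (R : Type*) [Ring R] : Prop :=
  ∀ x : R, IsStronglyPClean x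
/-- The `n`-th power of a two-sided ideal: the two-sided ideal generated by
products of `n` elements of `I`. -/
def TwoSidedIdeal.idealPow {R : Type*} [Ring R] (I : TwoSidedIdeal R) (n : ℕ) :
    TwoSidedIdeal R :=
  TwoSidedIdeal.span {x | ∃ f : Fin n → R, (∀ i, f i ∈ I) ∧ x = (List.ofFn f).prod}

section RootAux

variable {R S T : Type*} [Ring R] [Ring S] [Ring T]

lemma IsStronglyNilpotent.mul_right {a : R} (ha : IsStronglyNilpotent a) (d : R) :
    IsStronglyNilpotent (a * d) := by
  intro f hf0 hf
  choose r hr using hf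
  let g : ℕ → R := fun n => Nat.rec a (fun i gi => gi * (d * r i) * gi) n
  have hgs : ∀ i, g (i + 1) = g i * (d * r i) * g i := fun i => rfl
  have key : ∀ i, f i = g i * d := by
    intro i
    induction i with
    | zero => simpa [g] using hf0
    | succ i ih => rw [hr i, ih, hgs i]; simp [mul_assoc]
  obtain ⟨n, hn⟩ := ha g rfl fun i => ⟨d * r i, hgs i⟩
  exact ⟨n, by rw [key n, hn, zero_mul]⟩

lemma IsStronglyNilpotent.map (φ : S →+* T) (hφ : Function.Surjective φ)
    {a : S} (ha : IsStronglyNilpotent a) : IsStronglyNilpotent (φ a) := by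
  intro f hf0 hf
  choose r hr using hf
  choose s hs using fun i => hφ (r i)
  let g : ℕ → S := fun n => Nat.rec a (fun i gi => gi * s i * gi) n
  have hgs : ∀ i, g (i + 1) = g i * s i * g i := fun i => rfl
  have key : ∀ i, φ (g i) = f i := by
    intro i
    induction i with
    | zero => simpa [g] using hf0.symm
    | succ i ih => rw [hr i, hgs i, map_mul, map_mul, ih, hs i]
  obtain ⟨n, hn⟩ := ha g rfl fun i => ⟨s i, hgs i⟩
  exact ⟨n, by rw [← key n, hn, map_zero]⟩

lemma IsStronglyNilpotent.of_map (φ : S →+* T)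
    (hker : ∀ k : S, φ k = 0 → IsStronglyNilpotent k)
    {a : S} (ha : IsStronglyNilpotent (φ a)) : IsStronglyNilpotent a := by
  intro f hf0 hf
  obtain ⟨n, hn⟩ := ha (fun i => φ (f i)) (by simp [hf0])
    (fun i => by
      obtain ⟨r, hr⟩ := hf i
      exact ⟨φ r, by show φ (f (i + 1)) = φ (f i) * φ r * φ (f i); rw [hr, map_mul, map_mul]⟩)
  obtain ⟨m, hm⟩ := hker (f n) hn (fun i => f (n + i)) rfl
    (fun i => by have := hf (n + i); rwa [Nat.add_succ] at this)
  exact ⟨n + m, hm⟩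

lemma IsStronglyNilpotent.isNilpotent {a : S} (ha : IsStronglyNilpotent a) :
    IsNilpotent a := by
  obtain ⟨n, hn⟩ := ha (fun i => a ^ (2 ^ i)) (by norm_num)
    (fun i => ⟨1, by
      show a ^ 2 ^ (i + 1) = _
      rw [mul_one, ← pow_add, pow_succ, mul_two]⟩)
  exact ⟨2 ^ n, hn⟩

end RootAux

namespace StronglyPCleanAux

variable {R S T : Type*} [Ring R] [Ring S] [Ring T]

/-- A surjective image of a strongly P-clean ring is strongly P-clean. -/
lemma stronglyPCleanRing_of_surjective (φ : S →+* T) (hφ : Function.Surjective φ)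
    (h : StronglyPCleanRing S) : StronglyPCleanRing T := by
  intro x
  obtain ⟨y, rfl⟩ := hφ x
  obtain ⟨e, w, he, hw, hyew, hcomm⟩ := h y
  refine ⟨φ e, φ w, ?_, ?_, ?_, ?_⟩
  · show φ e * φ e = φ e
    rw [← map_mul, he.eq]
  · exact IsStronglyNilpotent.map φ hφ hw
  · rw [hyew, map_add]
  · rw [← map_mul, ← map_mul, hcomm]

/-- The natural map between quotients by comparable ring congruences. -/
def quotMap {c d : RingCon R} (h : c ≤ d) : c.Quotient →+* d.Quotient where
  toFun := Quotient.map' id fun a b hab => h hab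
  map_one' := rfl
  map_mul' := by rintro ⟨x⟩ ⟨y⟩; rfl
  map_zero' := rfl
  map_add' := by rintro ⟨x⟩ ⟨y⟩; rfl

lemma quotMap_mk {c d : RingCon R} (h : c ≤ d) (x : R) :
    quotMap h (x : c.Quotient) = (x : d.Quotient) := rfl

lemma mk_surjective (c : RingCon R) :
    Function.Surjective (fun x : R => (x : c.Quotient)) := fun z =>
  Quotient.inductionOn' z fun a => ⟨a, rfl⟩

lemma quotMap_surjective {c d : RingCon R} (h : c ≤ d) :
    Function.Surjective (quotMap h) := fun z => by
  obtain ⟨a, rfl⟩ := mk_surjective d z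
  exact ⟨(a : c.Quotient), rfl⟩

lemma mk_eq_zero_iff (J : TwoSidedIdeal R) (a : R) :
    (a : J.ringCon.Quotient) = 0 ↔ a ∈ J := by
  rw [← J.ringCon.coe_zero, RingCon.eq, J.rel_iff, sub_zero]

lemma mk'_eq_zero_iff (J : TwoSidedIdeal R) (a : R) :
    J.ringCon.mk' a = 0 ↔ a ∈ J := mk_eq_zero_iff J a

lemma mem_idealPow_one {I : TwoSidedIdeal R} {a : R} (ha : a ∈ I) :
    a ∈ I.idealPow 1 :=
  TwoSidedIdeal.subset_span ⟨fun _ => a, fun _ => ha, by simp⟩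

lemma pow_mem_idealPow {I : TwoSidedIdeal R} {a : R} (ha : a ∈ I) (n : ℕ) :
    a ^ n ∈ I.idealPow n :=
  TwoSidedIdeal.subset_span ⟨fun _ => a, fun _ => ha, by
    simp [List.ofFn_const, List.prod_replicate]⟩

lemma mul_mem_idealPow_succ {I : TwoSidedIdeal R} {j : ℕ} {x c : R}
    (hx : x ∈ I.idealPow j) (hc : c ∈ I) : x * c ∈ I.idealPow (j + 1) := by
  let J : TwoSidedIdeal R := TwoSidedIdeal.mk' {x | ∀ c ∈ I, x * c ∈ I.idealPow (j + 1)}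
    (fun c hc => by simp [TwoSidedIdeal.zero_mem])
    (fun {x y} hx hy c hc => by
      rw [add_mul]; exact TwoSidedIdeal.add_mem _ (hx c hc) (hy c hc))
    (fun {x} hx c hc => by rw [neg_mul]; exact TwoSidedIdeal.neg_mem _ (hx c hc))
    (fun {x y} hy c hc => by rw [mul_assoc]; exact TwoSidedIdeal.mul_mem_left _ _ _ (hy c hc))
    (fun {x y} hx c hc => by rw [mul_assoc]; exact hx _ (TwoSidedIdeal.mul_mem_left _ _ _ hc))
  have hJ : x ∈ J := by
    refine TwoSidedIdeal.mem_span_iff.mp hx J ?_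
    rintro y ⟨f, hf, rfl⟩
    simp only [SetLike.mem_coe, J, TwoSidedIdeal.mem_mk', Set.mem_setOf_eq]
    intro c hc
    refine TwoSidedIdeal.subset_span ⟨Fin.snoc f c, ?_, ?_⟩
    · intro i
      refine Fin.lastCases ?_ ?_ i
      · simpa using hc
      · intro i; simpa using hf i
    · rw [List.ofFn_succ']
      simp [Fin.snoc_castSucc, List.concat_eq_append]
  simp only [J, TwoSidedIdeal.mem_mk', Set.mem_setOf_eq] at hJ
  exact hJ c hc

lemma idealPow_le {I : TwoSidedIdeal R} {n : ℕ} (hn : 0 < n) : I.idealPow n ≤ I := by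
  intro x hx
  refine TwoSidedIdeal.mem_span_iff.mp hx I ?_
  rintro y ⟨f, hf, rfl⟩
  obtain ⟨m, rfl⟩ := Nat.exists_eq_add_of_lt hn
  rw [List.ofFn_succ, List.prod_cons]
  exact TwoSidedIdeal.mul_mem_right _ _ _ (hf 0)

variable {I : TwoSidedIdeal R} {n : ℕ}

lemma ker_strongly_nilpotent (hle : I.idealPow n ≤ I) (hn : 0 < n) :
    ∀ z : (I.idealPow n).ringCon.Quotient,
      quotMap (TwoSidedIdeal.ringCon_le_iff.mp hle) z = 0 → IsStronglyNilpotent z := by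
  intro z hz
  obtain ⟨a, rfl⟩ := mk_surjective _ z
  rw [quotMap_mk, mk_eq_zero_iff] at hz
  intro f hf0 hf
  choose r hr using hf
  choose s hs using fun i => mk_surjective (I.idealPow n).ringCon (r i)
  let g : ℕ → R := fun m => Nat.rec a (fun i gi => gi * s i * gi) m
  have hgs : ∀ i, g (i + 1) = g i * s i * g i := fun i => rfl
  have hs' : ∀ i, (I.idealPow n).ringCon.mk' (s i) = r i := hs
  have key : ∀ i, (I.idealPow n).ringCon.mk' (g i) = f i := by
    intro i
    induction i with
    | zero => exact hf0.symm
    | succ i ih =>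
      rw [hgs i, map_mul, map_mul, ih, hs' i, ← hr i]
  have mem : ∀ i, g i ∈ I ∧ g i ∈ I.idealPow (i + 1) := by
    intro i
    induction i with
    | zero => exact ⟨hz, mem_idealPow_one hz⟩
    | succ i ih =>
      rw [hgs i]
      exact ⟨TwoSidedIdeal.mul_mem_right _ _ _ (TwoSidedIdeal.mul_mem_right _ _ _ ih.1),
        mul_mem_idealPow_succ (TwoSidedIdeal.mul_mem_right _ _ _ ih.2) ih.1⟩
  obtain ⟨m, hm⟩ := Nat.exists_eq_succ_of_ne_zero hn.ne'
  refine ⟨m, ?_⟩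
  rw [← key m, mk'_eq_zero_iff]
  rw [hm]
  exact (mem m).2

lemma ker_pow_eq_zero (hle : I.idealPow n ≤ I) :
    ∀ z : (I.idealPow n).ringCon.Quotient,
      quotMap (TwoSidedIdeal.ringCon_le_iff.mp hle) z = 0 → z ^ n = 0 := by
  intro z hz
  obtain ⟨a, rfl⟩ := mk_surjective _ z
  rw [quotMap_mk, mk_eq_zero_iff] at hz
  have : ((a : (I.idealPow n).ringCon.Quotient)) ^ n
      = ((a ^ n : R) : (I.idealPow n).ringCon.Quotient) :=
    (map_pow ((I.idealPow n).ringCon.mk') a n).symm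
  rw [this, mk_eq_zero_iff]
  exact pow_mem_idealPow hz n

end StronglyPCleanAux

open StronglyPCleanAux

/-- **Theorem 2.8.** Let `I` be a two-sided ideal of a ring `R`. The following
are equivalent: (1) `R/I` is strongly P-clean; (2) `R/Iⁿ` is strongly P-clean
for some positive integer `n`; (3) `R/Iⁿ` is strongly P-clean for all positive
integers `n`. -/
theorem stronglyPCleanRing_quotient_pow_tfae
    (R : Type*) [Ring R] (I : TwoSidedIdeal R) :
    [StronglyPCleanRing I.ringCon.Quotient,
     ∃ n : ℕ, 0 < n ∧ StronglyPCleanRing (I.idealPow n).ringCon.Quotient,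
     ∀ n : ℕ, 0 < n → StronglyPCleanRing (I.idealPow n).ringCon.Quotient].TFAE := by
  tfae_have 1 → 3 := by
    intro h1 n hn x
    have hle : I.idealPow n ≤ I := idealPow_le hn
    set φ : (I.idealPow n).ringCon.Quotient →+* I.ringCon.Quotient :=
      quotMap (TwoSidedIdeal.ringCon_le_iff.mp hle) with hφdef
    have hker : ∀ k, φ k = 0 → IsStronglyNilpotent k := ker_strongly_nilpotent hle hn
    have hkerpow : ∀ k, φ k = 0 → k ^ n = 0 := ker_pow_eq_zero hle
    obtain ⟨e', w', he', hw', hu, hcomm⟩ := h1 (φ x)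
    have hw'sn : IsStronglyNilpotent w' := hw'
    have hcw : Commute e' w' := hcomm
    obtain ⟨k, hk⟩ := hw'sn.isNilpotent
    -- φ (x - x²) = w' * (1 - 2e' - w')
    have hxx : φ (x - x ^ 2) = w' * (1 - 2 * e' - w') := by
      rw [map_sub, map_pow, hu, pow_two, mul_add, add_mul, add_mul, he'.eq, hcomm,
        mul_sub, mul_sub, mul_one, two_mul, mul_add]
      abel
    have hwc : Commute w' (1 - 2 * e' - w') := by
      refine Commute.sub_right (Commute.sub_right (Commute.one_right w') ?_) (Commute.refl w')
      rw [two_mul]; exact hcw.symm.add_right hcw.symm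
    have h5 : φ ((x - x ^ 2) ^ k) = 0 := by
      rw [map_pow, hxx, hwc.mul_pow, hk, zero_mul]
    have h7 : (x - x ^ 2) ^ (k * n) = 0 := by
      rw [pow_mul]; exact hkerpow _ h5
    have hm : (x - x ^ 2) ^ (k * n + 1) = 0 := by
      rw [pow_succ, h7, zero_mul]
    set N := k * n + 1 with hN
    set e : (I.idealPow n).ringCon.Quotient := 1 - (1 - x ^ N) ^ N with he_def
    have he : IsIdempotentElem e := isIdempotentElem_one_sub_one_sub_pow_pow x N hm
    have hce : Commute x e := by
      refine (Commute.one_right x).sub_right (Commute.pow_right ?_ N)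
      exact (Commute.one_right x).sub_right ((Commute.refl x).pow_right N)
    -- compute φ (x - e)
    have hφe : φ e = 1 - (1 - (φ x) ^ N) ^ N := by
      rw [he_def]; simp only [map_sub, map_one, map_pow]
    have heN : e' ^ N = e' := he'.pow_succ_eq (k * n)
    have h1eN : (1 - e') ^ N = 1 - e' := he'.one_sub.pow_succ_eq (k * n)
    have hue : Commute e' (φ x) := by rw [hu]; exact (Commute.refl e').add_right hcw
    have hcomN : Commute (1 - e' ^ N) (1 - (φ x) ^ N) :=
      (Commute.one_left _).sub_left
        ((Commute.one_right _).sub_right (hue.pow_pow N N))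
    obtain ⟨c₁, hc₁⟩ := hcomN.sub_dvd_pow_sub_pow N
    obtain ⟨c₂, hc₂⟩ := (hue.symm.sub_dvd_pow_sub_pow N : φ x - e' ∣ (φ x) ^ N - e' ^ N)
    rw [heN, h1eN] at hc₁
    rw [heN] at hc₂
    have hwe : φ x - e' = w' := by rw [hu, add_sub_cancel_left]
    rw [hwe] at hc₂
    have hB : (1 - e') - (1 - (φ x) ^ N) = (φ x) ^ N - e' := by abel
    rw [hB, hc₂] at hc₁
    have h3 : (1 - (φ x) ^ N) ^ N = (1 - e') - w' * c₂ * c₁ := by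
      rw [← hc₁]; abel
    have hφw : φ (x - e) = w' * (1 - c₂ * c₁) := by
      rw [map_sub, hφe, h3, hu, mul_sub, mul_one, ← mul_assoc]
      abel
    have hsn : IsStronglyNilpotent (φ (x - e)) := by
      rw [hφw]; exact IsStronglyNilpotent.mul_right hw'sn _
    have hwS : IsStronglyNilpotent (x - e) := IsStronglyNilpotent.of_map φ hker hsn
    exact ⟨e, x - e, he, hwS, by abel, ((hce.symm).sub_right (Commute.refl e)).eq⟩
  tfae_have 3 → 2 := fun h => ⟨1, one_pos, h 1 one_pos⟩
  tfae_have 2 → 1 := by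
    rintro ⟨n, hn, h⟩
    have hle : I.idealPow n ≤ I := idealPow_le hn
    exact stronglyPCleanRing_of_surjective
      (quotMap (TwoSidedIdeal.ringCon_le_iff.mp hle))
      (quotMap_surjective _) h
  tfae_finish
end

section
/- Let R be a local ring and let A = [[a, v], [0, b]] ∈ T₂(R) be an upper triangular 2 × 2 matrix over R. Then A is strongly P-clean in T₂(R) if and only if a and b each lie in P(R) ∪ (1 + P(R)). -/
/-- The ring `Tₙ(R)` of upper triangular `n × n` matrices over `R`, as a
subring of the full matrix ring. -/
def upperTriangularSubring (n : ℕ) (R : Type*) [Ring R] :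
    Subring (Matrix (Fin n) (Fin n) R) where
  carrier := {A | ∀ i j : Fin n, j < i → A i j = 0}
  zero_mem' := fun _ _ _ => rfl
  one_mem' := fun _ _ h => Matrix.one_apply_ne (ne_of_gt h)
  add_mem' := by
    intro A B hA hB i j h
    simp [Matrix.add_apply, hA i j h, hB i j h]
  neg_mem' := by
    intro A hA i j h
    simp [Matrix.neg_apply, hA i j h]
  mul_mem' := by
    intro A B hA hB i j hij
    rw [Matrix.mul_apply]
    apply Finset.sum_eq_zero
    intro k _
    rcases lt_or_ge k i with hk | hk
    · rw [hA i k hk, zero_mul]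
    · rw [hB k j (lt_of_lt_of_le hij hk), mul_zero]

section helpers

variable {R : Type*} [Ring R]

lemma IsStronglyNilpotent.isNilpotent_s14 {x : R} (h : IsStronglyNilpotent x) :
    IsNilpotent x := by
  obtain ⟨n, hn⟩ := h (fun i => x ^ (2 ^ i)) (by simp)
    (fun i => ⟨1, by
      show x ^ 2 ^ (i + 1) = x ^ 2 ^ i * 1 * x ^ 2 ^ i
      rw [mul_one, ← pow_add, pow_succ, mul_two]⟩)
  exact ⟨2 ^ n, hn⟩

lemma idem_zero_or_one [IsLocalRing R] {e : R} (he : IsIdempotentElem e) :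
    e = 0 ∨ e = 1 := by
  rcases IsLocalRing.isUnit_or_isUnit_of_add_one (add_sub_cancel e 1) with h | h
  · exact Or.inr (h.mul_left_cancel (by rw [he, mul_one]))
  · refine Or.inl ?_
    have h1 : (1 : R) - e = 1 := h.mul_left_cancel (by rw [he.one_sub, mul_one])
    rwa [sub_eq_self] at h1

lemma sylvester_left {a b : R} (ha : IsUnit a) {n : ℕ} (hb : b ^ n = 0) (v : R) :
    ∃ x : R, a * x - x * b = v := by
  obtain ⟨u, rfl⟩ := ha
  refine ⟨∑ k ∈ Finset.range n, (↑u⁻¹ : R) ^ (k + 1) * v * b ^ k, ?_⟩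
  rw [Finset.mul_sum, Finset.sum_mul, ← Finset.sum_sub_distrib]
  have key : ∀ k, (↑u : R) * ((↑u⁻¹ : R) ^ (k + 1) * v * b ^ k)
      - (↑u⁻¹ : R) ^ (k + 1) * v * b ^ k * b
      = ((↑u⁻¹ : R) ^ k * v * b ^ k) - ((↑u⁻¹ : R) ^ (k+1) * v * b ^ (k+1)) := by
    intro k
    have h1 : (↑u : R) * ((↑u⁻¹ : R) ^ (k + 1) * v * b ^ k)
        = (↑u⁻¹ : R) ^ k * v * b ^ k := by
      rw [pow_succ' (↑u⁻¹ : R), ← mul_assoc, ← mul_assoc, ← mul_assoc,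
        Units.mul_inv, one_mul]
    have h2 : (↑u⁻¹ : R) ^ (k + 1) * v * b ^ k * b
        = (↑u⁻¹ : R) ^ (k + 1) * v * b ^ (k + 1) := by
      rw [mul_assoc, ← pow_succ]
    rw [h1, h2]
  rw [Finset.sum_congr rfl (fun k _ => key k), Finset.sum_range_sub']
  simp [hb]

lemma sylvester_right {a b : R} (hb : IsUnit b) {n : ℕ} (ha : a ^ n = 0) (v : R) :
    ∃ x : R, x * b - a * x = v := by
  obtain ⟨u, rfl⟩ := hb
  refine ⟨∑ k ∈ Finset.range n, a ^ k * v * (↑u⁻¹ : R) ^ (k + 1), ?_⟩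
  rw [Finset.sum_mul, Finset.mul_sum, ← Finset.sum_sub_distrib]
  have key : ∀ k, a ^ k * v * (↑u⁻¹ : R) ^ (k + 1) * ↑u
      - a * (a ^ k * v * (↑u⁻¹ : R) ^ (k + 1))
      = (a ^ k * v * (↑u⁻¹ : R) ^ k) - (a ^ (k+1) * v * (↑u⁻¹ : R) ^ (k+1)) := by
    intro k
    have h1 : a ^ k * v * (↑u⁻¹ : R) ^ (k + 1) * ↑u = a ^ k * v * (↑u⁻¹ : R) ^ k := by
      rw [pow_succ (↑u⁻¹ : R), ← mul_assoc, mul_assoc _ (↑u⁻¹ : R) (↑u : R),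
        Units.inv_mul, mul_one]
    have h2 : a * (a ^ k * v * (↑u⁻¹ : R) ^ (k + 1))
        = a ^ (k + 1) * v * (↑u⁻¹ : R) ^ (k + 1) := by
      rw [← mul_assoc, ← mul_assoc, ← pow_succ']
    rw [h1, h2]
  rw [Finset.sum_congr rfl (fun k _ => key k), Finset.sum_range_sub']
  simp [ha]

end helpers

namespace T2aux

variable {R : Type*} [Ring R]

lemma lower (X : upperTriangularSubring 2 R) :
    (X : Matrix (Fin 2) (Fin 2) R) 1 0 = 0 :=
  X.2 1 0 (by decide)

lemma mem2 {M : Matrix (Fin 2) (Fin 2) R} (h : M 1 0 = 0) :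
    M ∈ upperTriangularSubring 2 R := by
  intro i j hij
  fin_cases i <;> fin_cases j <;> first | exact absurd hij (by decide) | exact h

lemma diag_mul (k : Fin 2) (X Y : upperTriangularSubring 2 R) :
    ((X * Y : upperTriangularSubring 2 R) : Matrix (Fin 2) (Fin 2) R) k k
      = (X : Matrix (Fin 2) (Fin 2) R) k k * (Y : Matrix (Fin 2) (Fin 2) R) k k := by
  show ((X : Matrix (Fin 2) (Fin 2) R) * (Y : Matrix (Fin 2) (Fin 2) R)) k k = _
  rw [Matrix.mul_apply, Fin.sum_univ_two]
  fin_cases k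
  · simp [lower Y]
  · simp [lower X]

lemma sn_diag (k : Fin 2) {M : upperTriangularSubring 2 R}
    (h : IsStronglyNilpotent M) :
    IsStronglyNilpotent ((M : Matrix (Fin 2) (Fin 2) R) k k) := by
  intro f hf0 hf
  choose r hr using hf
  have smem : ∀ x : R, !![x, 0; 0, x] ∈ upperTriangularSubring 2 R := fun x =>
    mem2 (by simp)
  set s : R → upperTriangularSubring 2 R := fun x => ⟨!![x, 0; 0, x], smem x⟩ with hs
  have ps : ∀ x : R, ((s x : upperTriangularSubring 2 R) : Matrix (Fin 2) (Fin 2) R) k k = x := by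
    intro x; fin_cases k <;> simp [hs]
  set F : ℕ → upperTriangularSubring 2 R :=
    fun n => Nat.rec M (fun i Fi => Fi * s (r i) * Fi) n with hF
  have hFk : ∀ i, ((F i : upperTriangularSubring 2 R) : Matrix (Fin 2) (Fin 2) R) k k = f i := by
    intro i
    induction i with
    | zero => exact hf0.symm
    | succ i ih =>
      show ((F i * s (r i) * F i : upperTriangularSubring 2 R) :
        Matrix (Fin 2) (Fin 2) R) k k = f (i + 1)
      rw [diag_mul, diag_mul, ps, ih, ← hr i]
  obtain ⟨n, hn⟩ := h F rfl (fun i => ⟨s (r i), rfl⟩)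
  exact ⟨n, by rw [← hFk n, hn]; rfl⟩

lemma sn_lift {M : upperTriangularSubring 2 R}
    (h0 : IsStronglyNilpotent ((M : Matrix (Fin 2) (Fin 2) R) 0 0))
    (h1 : IsStronglyNilpotent ((M : Matrix (Fin 2) (Fin 2) R) 1 1)) :
    IsStronglyNilpotent M := by
  intro F hF0 hF
  choose S hS using hF
  have diagseq : ∀ k : Fin 2, IsStronglyNilpotent ((M : Matrix (Fin 2) (Fin 2) R) k k) →
      ∃ n, ((F n : upperTriangularSubring 2 R) : Matrix (Fin 2) (Fin 2) R) k k = 0 := by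
    intro k hk
    exact hk (fun n => ((F n : upperTriangularSubring 2 R) : Matrix (Fin 2) (Fin 2) R) k k)
      (by show ((F 0 : upperTriangularSubring 2 R) : Matrix (Fin 2) (Fin 2) R) k k = _; rw [hF0])
      (fun i => ⟨((S i : upperTriangularSubring 2 R) : Matrix (Fin 2) (Fin 2) R) k k,
        by simp only [hS i, diag_mul]⟩)
  have mono : ∀ (k : Fin 2) (n : ℕ),
      ((F n : upperTriangularSubring 2 R) : Matrix (Fin 2) (Fin 2) R) k k = 0 →
      ∀ m, n ≤ m → ((F m : upperTriangularSubring 2 R) : Matrix (Fin 2) (Fin 2) R) k k = 0 := by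
    intro k n hn m hm
    induction m, hm using Nat.le_induction with
    | base => exact hn
    | succ m _ ih => rw [hS m, diag_mul, diag_mul, ih, zero_mul, zero_mul]
  obtain ⟨n0, hn0⟩ := diagseq 0 h0
  obtain ⟨n1, hn1⟩ := diagseq 1 h1
  refine ⟨max n0 n1 + 1, ?_⟩
  have e0 := mono 0 n0 hn0 (max n0 n1) (le_max_left _ _)
  have e1 := mono 1 n1 hn1 (max n0 n1) (le_max_right _ _)
  rw [hS (max n0 n1)]
  apply Subtype.ext
  show ((F (max n0 n1) : upperTriangularSubring 2 R) : Matrix (Fin 2) (Fin 2) R)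
      * ((S (max n0 n1) : upperTriangularSubring 2 R) : Matrix (Fin 2) (Fin 2) R)
      * ((F (max n0 n1) : upperTriangularSubring 2 R) : Matrix (Fin 2) (Fin 2) R)
      = (0 : Matrix (Fin 2) (Fin 2) R)
  rw [Matrix.eta_fin_two ((F (max n0 n1) : upperTriangularSubring 2 R) : Matrix (Fin 2) (Fin 2) R),
    Matrix.eta_fin_two ((S (max n0 n1) : upperTriangularSubring 2 R) : Matrix (Fin 2) (Fin 2) R),
    e0, e1, lower, lower]
  ext i j
  fin_cases i <;> fin_cases j <;> simp [Matrix.mul_fin_two]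

end T2aux

/-- **Proposition 3.7.** Let `R` be a local ring and `A = [[a, v], [0, b]]` an
upper triangular `2 × 2` matrix over `R`. Then `A` is strongly P-clean in
`T₂(R)` iff `a` and `b` each lie in `P(R) ∪ (1 + P(R))`. -/
theorem isStronglyPClean_triangular_iff (R : Type*) [Ring R] [IsLocalRing R]
    (a v b : R) :
    IsStronglyPClean
      (⟨!![a, v; 0, b], by
        intro i j h
        fin_cases i <;> fin_cases j <;>
          first
            | exact absurd h (by decide)
            | simp⟩ : upperTriangularSubring 2 R) ↔
      (a ∈ primeRadical R ∪ {y | ∃ w ∈ primeRadical R, y = 1 + w} ∧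
        b ∈ primeRadical R ∪ {y | ∃ w ∈ primeRadical R, y = 1 + w}) := by
  constructor
  · rintro ⟨e, w, he, hw, hsum, -⟩
    have hv' : (!![a, v; 0, b] : Matrix (Fin 2) (Fin 2) R)
        = (e : Matrix (Fin 2) (Fin 2) R) + (w : Matrix (Fin 2) (Fin 2) R) :=
      congrArg Subtype.val hsum
    have hd : ∀ k : Fin 2, IsIdempotentElem ((e : Matrix (Fin 2) (Fin 2) R) k k) := by
      intro k
      have h1 : ((e * e : upperTriangularSubring 2 R) : Matrix (Fin 2) (Fin 2) R) k k
          = (e : Matrix (Fin 2) (Fin 2) R) k k := by rw [he]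
      rwa [T2aux.diag_mul] at h1
    have hwk : ∀ k : Fin 2, IsStronglyNilpotent ((w : Matrix (Fin 2) (Fin 2) R) k k) :=
      fun k => T2aux.sn_diag k hw
    have ha0 : a = (e : Matrix (Fin 2) (Fin 2) R) 0 0 + (w : Matrix (Fin 2) (Fin 2) R) 0 0 := by
      have := congr_fun (congr_fun hv' 0) 0
      simpa using this
    have hb1 : b = (e : Matrix (Fin 2) (Fin 2) R) 1 1 + (w : Matrix (Fin 2) (Fin 2) R) 1 1 := by
      have := congr_fun (congr_fun hv' 1) 1
      simpa using this
    constructor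
    · rcases idem_zero_or_one (hd 0) with h | h
      · exact Or.inl (by show IsStronglyNilpotent a; rw [ha0, h, zero_add]; exact hwk 0)
      · exact Or.inr ⟨_, hwk 0, by rw [ha0, h]⟩
    · rcases idem_zero_or_one (hd 1) with h | h
      · exact Or.inl (by show IsStronglyNilpotent b; rw [hb1, h, zero_add]; exact hwk 1)
      · exact Or.inr ⟨_, hwk 1, by rw [hb1, h]⟩
  · rintro ⟨ha | ⟨w0, hw0, rfl⟩, hb | ⟨w1, hw1, rfl⟩⟩
    · -- a ∈ P, b ∈ P : e = 0, W = A
      refine ⟨0, ⟨!![a, v; 0, b], T2aux.mem2 (by simp)⟩, IsIdempotentElem.zero, ?_, ?_, ?_⟩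
      · exact T2aux.sn_lift (by simpa [primeRadical] using ha) (by simpa [primeRadical] using hb)
      · exact Subtype.ext (by show !![a, v; 0, b] = 0 + !![a, v; 0, b]; rw [zero_add])
      · rw [zero_mul, mul_zero]
    · -- a ∈ P, b = 1 + w1 : e = [[0,x],[0,1]]
      obtain ⟨n, han⟩ := (IsStronglyNilpotent.isNilpotent_s14 ha)
      have hbU : IsUnit (1 + w1) :=
        IsNilpotent.isUnit_one_add (IsStronglyNilpotent.isNilpotent_s14 hw1)
      obtain ⟨x, hx⟩ := sylvester_right hbU han v
      have key : x * w1 = a * x + (v - x) := by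
        rw [← hx, mul_add, mul_one]; abel
      refine ⟨⟨!![0, x; 0, 1], T2aux.mem2 (by simp)⟩,
        ⟨!![a, v - x; 0, w1], T2aux.mem2 (by simp)⟩, ?_, ?_, ?_, ?_⟩
      · apply Subtype.ext
        show !![0, x; 0, 1] * !![0, x; 0, 1] = !![0, x; 0, 1]
        ext i j
        fin_cases i <;> fin_cases j <;> simp [Matrix.mul_apply, Fin.sum_univ_two]
      · exact T2aux.sn_lift (by simpa [primeRadical] using ha) (by simpa [primeRadical] using hw1)
      · apply Subtype.ext
        show !![a, v; 0, 1 + w1] = !![0, x; 0, 1] + !![a, v - x; 0, w1]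
        ext i j
        fin_cases i <;> fin_cases j <;> simp
      · apply Subtype.ext
        show !![0, x; 0, 1] * !![a, v - x; 0, w1] = !![a, v - x; 0, w1] * !![0, x; 0, 1]
        ext i j
        fin_cases i <;> fin_cases j <;>
          simp [Matrix.mul_apply, Fin.sum_univ_two, key]
    · -- a = 1 + w0, b ∈ P : e = [[1,x],[0,0]]
      obtain ⟨n, hbn⟩ := (IsStronglyNilpotent.isNilpotent_s14 hb)
      have haU : IsUnit (1 + w0) :=
        IsNilpotent.isUnit_one_add (IsStronglyNilpotent.isNilpotent_s14 hw0)
      obtain ⟨x, hx⟩ := sylvester_left haU hbn v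
      have key : v - x + x * b = w0 * x := by
        rw [← hx, add_mul, one_mul]; abel
      refine ⟨⟨!![1, x; 0, 0], T2aux.mem2 (by simp)⟩,
        ⟨!![w0, v - x; 0, b], T2aux.mem2 (by simp)⟩, ?_, ?_, ?_, ?_⟩
      · apply Subtype.ext
        show !![1, x; 0, 0] * !![1, x; 0, 0] = !![1, x; 0, 0]
        ext i j
        fin_cases i <;> fin_cases j <;> simp [Matrix.mul_apply, Fin.sum_univ_two]
      · exact T2aux.sn_lift (by simpa [primeRadical] using hw0) (by simpa [primeRadical] using hb)
      · apply Subtype.ext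
        show !![1 + w0, v; 0, b] = !![1, x; 0, 0] + !![w0, v - x; 0, b]
        ext i j
        fin_cases i <;> fin_cases j <;> simp
      · apply Subtype.ext
        show !![1, x; 0, 0] * !![w0, v - x; 0, b] = !![w0, v - x; 0, b] * !![1, x; 0, 0]
        ext i j
        fin_cases i <;> fin_cases j <;>
          simp [Matrix.mul_apply, Fin.sum_univ_two, key]
    · -- a = 1 + w0, b = 1 + w1 : e = 1
      refine ⟨1, ⟨!![w0, v; 0, w1], T2aux.mem2 (by simp)⟩, IsIdempotentElem.one, ?_, ?_, ?_⟩
      · exact T2aux.sn_lift (by simpa [primeRadical] using hw0) (by simpa [primeRadical] using hw1)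
      · apply Subtype.ext
        show !![1 + w0, v; 0, 1 + w1] = 1 + !![w0, v; 0, w1]
        ext i j
        fin_cases i <;> fin_cases j <;> simp [Matrix.one_apply]
      · rw [one_mul, mul_one]
end

section
/- Let R be a local ring. Then a matrix A ∈ M₂(R) is strongly P-clean if and only if A ∈ M₂(P(R)), or I₂ − A ∈ M₂(P(R)), or A is similar (conjugate by an invertible matrix) to a diagonal matrix diag(λ, μ) with λ ∈ P(R) and μ ∈ 1 + P(R). -/
section General
variable {R : Type*} [Ring R]

structure PCIdl (I : Set R) : Prop where
  zero : (0:R) ∈ I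
  add : ∀ {a b : R}, a ∈ I → b ∈ I → a + b ∈ I
  mul_left : ∀ {a : R}, a ∈ I → ∀ r : R, r * a ∈ I
  mul_right : ∀ {a : R}, a ∈ I → ∀ r : R, a * r ∈ I

def PCPrime (I : Set R) : Prop :=
  PCIdl I ∧ ∀ a b : R, (∀ r : R, a * r * b ∈ I) → a ∈ I ∨ b ∈ I

lemma PCIdl.neg {I : Set R} (hI : PCIdl I) {a : R} (ha : a ∈ I) : -a ∈ I := by
  have := hI.mul_left ha (-1); simpa using this

lemma sn_mem_prime {a : R} (ha : IsStronglyNilpotent a) {I : Set R} (hI : PCPrime I) :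
    a ∈ I := by
  by_contra h
  have key : ∀ x : R, x ∉ I → ∃ r, x * r * x ∉ I := by
    intro x hx
    by_contra hc; push_neg at hc
    rcases hI.2 x x (fun r => hc r) with h' | h' <;> exact hx h'
  let g : {x : R // x ∉ I} → {x : R // x ∉ I} := fun x =>
    ⟨x.1 * Classical.choose (key x.1 x.2) * x.1, Classical.choose_spec (key x.1 x.2)⟩
  let F : ℕ → {x : R // x ∉ I} := fun n => g^[n] ⟨a, h⟩
  have hstep : ∀ i, ∃ r : R, (F (i+1)).1 = (F i).1 * r * (F i).1 := by
    intro i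
    have h' : F (i+1) = g (F i) := Function.iterate_succ_apply' g i _
    exact ⟨Classical.choose (key (F i).1 (F i).2), by rw [h']⟩
  obtain ⟨n, hn⟩ := ha (fun n => (F n).1) rfl hstep
  exact (F n).2 (hn ▸ hI.1.zero)

/-- the two-sided span pieces -/
def pcSpan (x : R) : Set R := (AddSubgroup.closure {y : R | ∃ r s : R, y = r * x * s} : Set R)

lemma pcSpan_self (x : R) : x ∈ pcSpan x :=
  AddSubgroup.subset_closure ⟨1, 1, by simp⟩

lemma pcSpan_mul_left (x : R) {z : R} (hz : z ∈ pcSpan x) (r : R) : r * z ∈ pcSpan x := by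
  induction hz using AddSubgroup.closure_induction with
  | mem y hy => obtain ⟨r₁, s₁, rfl⟩ := hy; exact AddSubgroup.subset_closure ⟨r * r₁, s₁, by noncomm_ring⟩
  | zero => simpa [pcSpan] using (AddSubgroup.closure _).zero_mem
  | add a b _ _ ha hb => simpa [pcSpan, mul_add] using (AddSubgroup.closure _).add_mem ha hb
  | neg a _ ha => simpa [pcSpan, mul_neg] using (AddSubgroup.closure _).neg_mem ha

lemma pcSpan_mul_right (x : R) {z : R} (hz : z ∈ pcSpan x) (r : R) : z * r ∈ pcSpan x := by
  induction hz using AddSubgroup.closure_induction with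
  | mem y hy => obtain ⟨r₁, s₁, rfl⟩ := hy; exact AddSubgroup.subset_closure ⟨r₁, s₁ * r, by noncomm_ring⟩
  | zero => simpa [pcSpan] using (AddSubgroup.closure _).zero_mem
  | add a b _ _ ha hb => simpa [pcSpan, add_mul] using (AddSubgroup.closure _).add_mem ha hb
  | neg a _ ha => simpa [pcSpan, neg_mul] using (AddSubgroup.closure _).neg_mem ha

/-- `P + (x)` -/
def pcSum (P : Set R) (x : R) : Set R := {u | ∃ p ∈ P, ∃ z ∈ pcSpan x, u = p + z}

lemma pcSum_idl {P : Set R} (hP : PCIdl P) (x : R) : PCIdl (pcSum P x) where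
  zero := ⟨0, hP.zero, 0, (AddSubgroup.closure _).zero_mem, by simp⟩
  add := by
    rintro a b ⟨p, hp, z, hz, rfl⟩ ⟨q, hq, w, hw, rfl⟩
    exact ⟨p + q, hP.add hp hq, z + w, (AddSubgroup.closure _).add_mem hz hw, by abel⟩
  mul_left := by
    rintro a ⟨p, hp, z, hz, rfl⟩ r
    exact ⟨r * p, hP.mul_left hp r, r * z, pcSpan_mul_left x hz r, by noncomm_ring⟩
  mul_right := by
    rintro a ⟨p, hp, z, hz, rfl⟩ r
    exact ⟨p * r, hP.mul_right hp r, z * r, pcSpan_mul_right x hz r, by noncomm_ring⟩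

lemma mem_pcSum_left {P : Set R} {x p : R} (hp : p ∈ P) : p ∈ pcSum P x :=
  ⟨p, hp, 0, (AddSubgroup.closure _).zero_mem, by simp⟩

lemma mem_pcSum_self {P : Set R} (hP : PCIdl P) (x : R) : x ∈ pcSum P x :=
  ⟨0, hP.zero, x, pcSpan_self x, by simp⟩

end General

section General2
variable {R : Type*} [Ring R]

lemma sn_of_mem_all {a : R} (h : ∀ I : Set R, PCPrime I → a ∈ I) :
    IsStronglyNilpotent a := by
  by_contra hna
  unfold IsStronglyNilpotent at hna
  push_neg at hna
  obtain ⟨f, hf0, hstep, hnz⟩ := hna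
  -- Zorn
  set S : Set (Set R) := {I | PCIdl I ∧ ∀ n, f n ∉ I} with hS
  have h0S : ({0} : Set R) ∈ S := by
    have hidl : PCIdl ({0} : Set R) := by
      constructor
      · rfl
      · intro a b ha hb; simp_all
      · intro a ha r; simp_all
      · intro a ha r; simp_all
    exact ⟨hidl, fun n hn => hnz n (by simpa using hn)⟩
  obtain ⟨P, -, hPS, hPmax⟩ := by
    refine zorn_subset_nonempty S ?_ _ h0S
    intro c hcS hchain hcne
    refine ⟨⋃₀ c, ⟨?_, ?_⟩, fun s hs => Set.subset_sUnion_of_mem hs⟩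
    · obtain ⟨I₀, hI₀⟩ := hcne
      constructor
      · exact ⟨I₀, hI₀, (hcS hI₀).1.zero⟩
      · rintro x y ⟨I, hI, hx⟩ ⟨J, hJ, hy⟩
        rcases hchain.total hI hJ with hle | hle
        · exact ⟨J, hJ, (hcS hJ).1.add (hle hx) hy⟩
        · exact ⟨I, hI, (hcS hI).1.add hx (hle hy)⟩
      · rintro x ⟨I, hI, hx⟩ r; exact ⟨I, hI, (hcS hI).1.mul_left hx r⟩
      · rintro x ⟨I, hI, hx⟩ r; exact ⟨I, hI, (hcS hI).1.mul_right hx r⟩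
    · rintro n ⟨I, hI, hx⟩; exact (hcS hI).2 n hx
  obtain ⟨hPidl, hPf⟩ := hPS
  -- P is prime
  have hprime : PCPrime P := by
    refine ⟨hPidl, ?_⟩
    intro x y hxy
    by_contra hc
    push_neg at hc
    obtain ⟨hx, hy⟩ := hc
    -- f eventually in pcSum P x and pcSum P y
    have key : ∀ z : R, z ∉ P → ∃ m, ∀ k, m ≤ k → f k ∈ pcSum P z := by
      intro z hz
      have hne : pcSum P z ∉ S := by
        intro hmem
        have hsub : P ⊆ pcSum P z := fun p hp => mem_pcSum_left hp
        have := hPmax hmem hsub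
        exact hz (this (mem_pcSum_self hPidl z))
      have : ∃ m, f m ∈ pcSum P z := by
        by_contra hcon; push_neg at hcon
        exact hne ⟨pcSum_idl hPidl z, hcon⟩
      obtain ⟨m, hm⟩ := this
      refine ⟨m, fun k hk => ?_⟩
      induction k with
      | zero => simpa [Nat.le_zero.1 hk] using hm
      | succ k ih =>
        rcases Nat.lt_or_ge m (k+1) with hlt | hge
        · have hk' : m ≤ k := Nat.lt_succ_iff.1 hlt
          obtain ⟨r, hr⟩ := hstep k
          have := (pcSum_idl hPidl z).mul_right (ih hk') r
          have := (pcSum_idl hPidl z).mul_right ((pcSum_idl hPidl z).mul_right (ih hk') r) (f k)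
          rw [hr]
          exact (pcSum_idl hPidl z).mul_right ((pcSum_idl hPidl z).mul_right (ih hk') r) (f k)
        · have : k + 1 = m := le_antisymm hge hk
          simpa [this] using hm
    obtain ⟨m, hmx⟩ := key x hx
    obtain ⟨n, hny⟩ := key y hy
    set N := max m n
    obtain ⟨p, hp, z, hz, hfz⟩ := hmx N (le_max_left _ _)
    obtain ⟨q, hq, w, hw, hfw⟩ := hny N (le_max_right _ _)
    obtain ⟨r, hr⟩ := hstep N
    -- z * r * w ∈ P
    have hzw : ∀ z' ∈ pcSpan x, ∀ w' ∈ pcSpan y, z' * r * w' ∈ P := by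
      intro z' hz'
      induction hz' using AddSubgroup.closure_induction with
      | mem u hu =>
        obtain ⟨r₁, s₁, rfl⟩ := hu
        intro w' hw'
        induction hw' using AddSubgroup.closure_induction with
        | mem v hv =>
          obtain ⟨r₂, s₂, rfl⟩ := hv
          have : r₁ * x * s₁ * r * (r₂ * y * s₂) = r₁ * (x * (s₁ * r * r₂) * y) * s₂ := by
            noncomm_ring
          rw [this]
          exact hPidl.mul_right (hPidl.mul_left (hxy _) r₁) s₂
        | zero => simpa using hPidl.zero
        | add a b _ _ pa pb => simpa [mul_add] using hPidl.add pa pb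
        | neg a _ pa => simpa [mul_neg] using hPidl.neg pa
      | zero => intro w' hw'; simpa using hPidl.zero
      | add a b _ _ pa pb =>
        intro w' hw'
        simpa [add_mul] using hPidl.add (pa w' hw') (pb w' hw')
      | neg a _ pa =>
        intro w' hw'
        simpa [neg_mul] using hPidl.neg (pa w' hw')
    have hfN : f (N+1) ∈ P := by
      have e1 : f (N+1) = (p + z) * r * (q + w) := by rw [← hfz, ← hfw]; exact hr
      have e2 : (p + z) * r * (q + w) = p * (r * (q + w)) + (z * r) * q + z * r * w := by
        noncomm_ring
      rw [e1, e2]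
      exact hPidl.add (hPidl.add (hPidl.mul_right hp _) (hPidl.mul_left hq _)) (hzw z hz w hw)
    exact hPf (N+1) hfN
  exact hPf 0 (hf0 ▸ h P hprime)

lemma sn_iff (a : R) : IsStronglyNilpotent a ↔ ∀ I : Set R, PCPrime I → a ∈ I :=
  ⟨fun h _ hI => sn_mem_prime h hI, sn_of_mem_all⟩

lemma sn_zero : IsStronglyNilpotent (0 : R) :=
  (sn_iff 0).2 fun _ hI => hI.1.zero

lemma sn_add {a b : R} (ha : IsStronglyNilpotent a) (hb : IsStronglyNilpotent b) :
    IsStronglyNilpotent (a + b) :=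
  (sn_iff _).2 fun I hI => hI.1.add ((sn_iff a).1 ha I hI) ((sn_iff b).1 hb I hI)

lemma sn_neg {a : R} (ha : IsStronglyNilpotent a) : IsStronglyNilpotent (-a) :=
  (sn_iff _).2 fun I hI => hI.1.neg ((sn_iff a).1 ha I hI)

lemma sn_mul_left {a : R} (ha : IsStronglyNilpotent a) (r : R) : IsStronglyNilpotent (r * a) :=
  (sn_iff _).2 fun I hI => hI.1.mul_left ((sn_iff a).1 ha I hI) r

lemma sn_mul_right {a : R} (ha : IsStronglyNilpotent a) (r : R) : IsStronglyNilpotent (a * r) :=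
  (sn_iff _).2 fun I hI => hI.1.mul_right ((sn_iff a).1 ha I hI) r

end General2

section MatrixSN
variable {R : Type*} [Ring R]

open Matrix

local notation "M₂" => Matrix (Fin 2) (Fin 2) R

lemma entry_mul_stdBasis (A B : M₂) (i j : Fin 2) (r : R) :
    (A * single j i r * B) i j = A i j * r * B i j := by
  fin_cases i <;> fin_cases j <;>
    simp [Matrix.mul_apply, Matrix.single, Fin.sum_univ_two, Matrix.of_apply]

lemma stdBasis_mul_stdBasis (B : M₂) (i j : Fin 2) (x y : R) :
    single i j x * B * single i j y = single i j (x * B j i * y) := by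
  ext p q
  fin_cases i <;> fin_cases j <;> fin_cases p <;> fin_cases q <;>
    simp [Matrix.mul_apply, Matrix.single, Fin.sum_univ_two, Matrix.of_apply]

lemma sn_entry {A : M₂} (hA : IsStronglyNilpotent A) (i j : Fin 2) :
    IsStronglyNilpotent (A i j) := by
  intro f hf0 hstep
  let G : ℕ → M₂ := fun n => Nat.rec A
    (fun k Fk => Fk * single j i (Classical.choose (hstep k)) * Fk) n
  have hG0 : G 0 = A := rfl
  have hGstep : ∀ k, G (k+1) = G k * single j i (Classical.choose (hstep k)) * G k :=
    fun k => rfl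
  obtain ⟨n, hn⟩ := hA G hG0 (fun k => ⟨_, hGstep k⟩)
  have hinv : ∀ k, G k i j = f k := by
    intro k
    induction k with
    | zero => rw [hG0, hf0]
    | succ k ih =>
      rw [hGstep k, entry_mul_stdBasis, ih, ← Classical.choose_spec (hstep k)]
  exact ⟨n, by rw [← hinv n, hn]; simp⟩

lemma sn_stdBasis {a : R} (ha : IsStronglyNilpotent a) (i j : Fin 2) :
    IsStronglyNilpotent (single i j a : M₂) := by
  intro F hF0 hstep
  let g : ℕ → R := fun n => F n i j
  have hinv : ∀ k, F k = single i j (g k) := by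
    intro k
    induction k with
    | zero => rw [hF0]; congr 1; simp [g, hF0]
    | succ k ih =>
      obtain ⟨B, hB⟩ := hstep k
      have hF : F (k+1) = single i j (g k * B j i * g k) := by
        rw [hB, ih, stdBasis_mul_stdBasis]
      have hg1 : g (k+1) = g k * B j i * g k := by
        have h2 : F (k+1) i j = g k * B j i * g k := by rw [hF]; simp
        exact h2
      rw [hF, hg1]
  have hg : ∀ k, ∃ r : R, g (k+1) = g k * r * g k := by
    intro k
    obtain ⟨B, hB⟩ := hstep k
    refine ⟨B j i, ?_⟩
    have h2 : F (k+1) i j = g k * B j i * g k := by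
      rw [hB, hinv k, stdBasis_mul_stdBasis]; simp
    exact h2
  obtain ⟨n, hn⟩ := ha g (by simp [g, hF0]) hg
  exact ⟨n, by rw [hinv n, hn]; simp⟩

lemma sn_matrix_of_entries {A : M₂} (h : ∀ i j, IsStronglyNilpotent (A i j)) :
    IsStronglyNilpotent A := by
  have hdecomp : A = single 0 0 (A 0 0) + single 0 1 (A 0 1)
      + single 1 0 (A 1 0) + single 1 1 (A 1 1) := by
    ext p q
    fin_cases p <;> fin_cases q <;> simp [Matrix.single, Matrix.of_apply]
  rw [hdecomp]
  exact sn_add (sn_add (sn_add (sn_stdBasis (h 0 0) 0 0) (sn_stdBasis (h 0 1) 0 1))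
    (sn_stdBasis (h 1 0) 1 0)) (sn_stdBasis (h 1 1) 1 1)

end MatrixSN

section Local
variable {R : Type*} [Ring R] [IsLocalRing R]

lemma local_or (a : R) : IsUnit a ∨ IsUnit (1 - a) :=
  IsLocalRing.isUnit_or_isUnit_of_add_one (by noncomm_ring)

lemma local_idem_eq_zero_or_one {e : R} (he : e * e = e) : e = 0 ∨ e = 1 := by
  rcases local_or e with h | h
  · right
    obtain ⟨u, hu⟩ := h
    have h1 : (↑u⁻¹ : R) * (e * e) = e := by rw [← mul_assoc, ← hu, u.inv_mul, one_mul]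
    have h2 : (↑u⁻¹ : R) * (e * e) = 1 := by rw [he, ← hu, u.inv_mul]
    exact h1.symm.trans h2
  · left
    obtain ⟨u, hu⟩ := h
    have h0 : e * (1 - e) = 0 := by rw [mul_sub, he, mul_one, sub_self]
    have : e * ((1 - e) * (↑u⁻¹ : R)) = 0 := by rw [← mul_assoc, h0, zero_mul]
    rw [← hu, u.mul_inv, mul_one] at this
    exact this

lemma local_isUnit_of_mul_eq_one {x s : R} (h : x * s = 1) : IsUnit x := by
  have hsx : (s * x) * (s * x) = s * x := by
    calc (s * x) * (s * x) = s * (x * s) * x := by noncomm_ring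
      _ = s * x := by rw [h]; noncomm_ring
  rcases local_idem_eq_zero_or_one hsx with h0 | h1
  · exfalso
    have : x = 0 := by
      calc x = (x * s) * x := by rw [h, one_mul]
        _ = x * (s * x) := by rw [mul_assoc]
        _ = 0 := by rw [h0, mul_zero]
    rw [this, zero_mul] at h
    exact one_ne_zero h.symm
  · exact ⟨⟨x, s, h, h1⟩, rfl⟩

lemma local_isUnit_of_one_eq_mul {s x : R} (h : s * x = 1) : IsUnit x := by
  have hxs : (x * s) * (x * s) = x * s := by
    calc (x * s) * (x * s) = x * (s * x) * s := by noncomm_ring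
      _ = x * s := by rw [h]; noncomm_ring
  rcases local_idem_eq_zero_or_one hxs with h0 | h1
  · exfalso
    have : x = 0 := by
      calc x = x * (s * x) := by rw [h, mul_one]
        _ = (x * s) * x := by rw [mul_assoc]
        _ = 0 := by rw [h0, zero_mul]
    rw [this, mul_zero] at h
    exact one_ne_zero h.symm
  · exact ⟨⟨x, s, h1, h⟩, rfl⟩

lemma local_nonunit_mul_left {x : R} (hx : ¬IsUnit x) (y : R) : ¬IsUnit (x * y) := by
  intro h
  obtain ⟨u, hu⟩ := h
  have : x * (y * (↑u⁻¹ : R)) = 1 := by rw [← mul_assoc, ← hu, u.mul_inv]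
  exact hx (local_isUnit_of_mul_eq_one this)

lemma local_nonunit_mul_right {y : R} (hy : ¬IsUnit y) (x : R) : ¬IsUnit (x * y) := by
  intro h
  obtain ⟨u, hu⟩ := h
  have : ((↑u⁻¹ : R) * x) * y = 1 := by rw [mul_assoc, ← hu, u.inv_mul]
  exact hy (local_isUnit_of_one_eq_mul this)

lemma local_nonunit_add {x y : R} (hx : ¬IsUnit x) (hy : ¬IsUnit y) : ¬IsUnit (x + y) := by
  intro h
  obtain ⟨u, hu⟩ := h
  have h1 : x * (↑u⁻¹ : R) + y * (↑u⁻¹ : R) = 1 := by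
    rw [← add_mul, ← hu, u.mul_inv]
  rcases IsLocalRing.isUnit_or_isUnit_of_add_one h1 with h' | h'
  · obtain ⟨v, hv⟩ := h'
    have : x * ((↑u⁻¹ : R) * (↑v⁻¹ : R)) = 1 := by
      rw [← mul_assoc, ← hv, v.mul_inv]
    exact hx (local_isUnit_of_mul_eq_one this)
  · obtain ⟨v, hv⟩ := h'
    have : y * ((↑u⁻¹ : R) * (↑v⁻¹ : R)) = 1 := by
      rw [← mul_assoc, ← hv, v.mul_inv]
    exact hy (local_isUnit_of_mul_eq_one this)

lemma local_unit_sub_nonunit {u n : R} (hu : IsUnit u) (hn : ¬IsUnit n) : IsUnit (u - n) := by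
  by_contra h
  have : ¬IsUnit ((u - n) + n) := local_nonunit_add h hn
  rw [sub_add_cancel] at this
  exact this hu

end Local

section MatUnits
variable {R : Type*} [Ring R]

open Matrix

local notation "M₂" => Matrix (Fin 2) (Fin 2) R

lemma isUnit_mat_of_inv (A B : M₂) (h1 : A * B = 1) (h2 : B * A = 1) : IsUnit A :=
  ⟨⟨A, B, h1, h2⟩, rfl⟩

lemma mat2_eq (a b c d a' b' c' d' : R) (h1 : a = a') (h2 : b = b') (h3 : c = c') (h4 : d = d') :
    !![a, b; c, d] = !![a', b'; c', d'] := by rw [h1, h2, h3, h4]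

lemma isUnit_lower (x : R) : IsUnit !![(1:R), 0; x, 1] := by
  apply isUnit_mat_of_inv _ !![(1:R), 0; -x, 1] <;>
    · rw [Matrix.mul_fin_two, Matrix.one_fin_two]
      apply mat2_eq <;> noncomm_ring

lemma isUnit_upper (x : R) : IsUnit !![(1:R), x; 0, 1] := by
  apply isUnit_mat_of_inv _ !![(1:R), -x; 0, 1] <;>
    · rw [Matrix.mul_fin_two, Matrix.one_fin_two]
      apply mat2_eq <;> noncomm_ring

lemma isUnit_diag {p σ p' σ' : R} (hp : p * p' = 1) (hp' : p' * p = 1)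
    (hσ : σ * σ' = 1) (hσ' : σ' * σ = 1) : IsUnit !![p, 0; 0, σ] := by
  apply isUnit_mat_of_inv _ !![p', 0; 0, σ'] <;>
    · rw [Matrix.mul_fin_two, Matrix.one_fin_two]
      apply mat2_eq <;> simp [hp, hp', hσ, hσ']

lemma isUnit_schur {p q r s p' σ' : R} (hp : p * p' = 1) (hp' : p' * p = 1)
    (hσ : (s - r * p' * q) * σ' = 1) (hσ' : σ' * (s - r * p' * q) = 1) :
    IsUnit !![p, q; r, s] := by
  have factor : !![p, q; r, s] = !![(1:R), 0; r * p', 1] * !![p, 0; 0, s - r * p' * q]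
      * !![(1:R), p' * q; 0, 1] := by
    rw [Matrix.mul_fin_two, Matrix.mul_fin_two]
    apply mat2_eq
    · simp
    · simp only [mul_zero, zero_mul, mul_one, one_mul, add_zero, zero_add]
      rw [← mul_assoc, hp, one_mul]
    · simp only [mul_zero, zero_mul, mul_one, one_mul, add_zero, zero_add]
      rw [mul_assoc r p' p, hp', mul_one]
    · simp only [mul_zero, zero_mul, mul_one, one_mul, add_zero, zero_add]
      rw [mul_assoc r p' p, hp', mul_one, ← mul_assoc r p' q]
      noncomm_ring
  rw [factor]
  exact ((isUnit_lower (r * p')).mul (isUnit_diag hp hp' hσ hσ')).mul (isUnit_upper (p' * q))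

end MatUnits

section Classify
variable {R : Type*} [Ring R] [IsLocalRing R]

open Matrix

local notation "M₂" => Matrix (Fin 2) (Fin 2) R

lemma mul_entry (X Y : M₂) (i j : Fin 2) :
    (X * Y) i j = X i 0 * Y 0 j + X i 1 * Y 1 j := by
  rw [Matrix.mul_apply, Fin.sum_univ_two]

lemma idem_rels {E : M₂} (hE : E * E = E) (i j : Fin 2) :
    E i 0 * E 0 j + E i 1 * E 1 j = E i j := by
  rw [← mul_entry, hE]

lemma conj_idem {E : M₂} (hE : E * E = E) (V : M₂ˣ) :
    ((V⁻¹).val * E * V.val) * ((V⁻¹).val * E * V.val) = (V⁻¹).val * E * V.val := by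
  have h' : (V.val * (V⁻¹).val) = 1 := V.mul_inv
  calc ((V⁻¹).val * E * V.val) * ((V⁻¹).val * E * V.val)
      = (V⁻¹).val * E * (V.val * (V⁻¹).val) * E * V.val := by noncomm_ring
    _ = (V⁻¹).val * (E * E) * V.val := by rw [h']; noncomm_ring
    _ = (V⁻¹).val * E * V.val := by rw [hE]

lemma conj_conj (V W : M₂ˣ) (E : M₂) :
    ((V * W)⁻¹).val * E * (V * W).val = (W⁻¹).val * ((V⁻¹).val * E * V.val) * W.val := by
  rw [_root_.mul_inv_rev, Units.val_mul, Units.val_mul]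
  noncomm_ring

/-- Core case: idempotent with (0,0) entry a unit. -/
lemma idem_conj_of_corner_unit (E : M₂) (hE : E * E = E) (h1 : E ≠ 1)
    (ha : IsUnit (E 0 0)) :
    ∃ U : M₂ˣ, (U⁻¹).val * E * U.val = !![(1:R), 0; 0, 0] := by
  set a := E 0 0 with hadef
  set b := E 0 1 with hbdef
  set c := E 1 0 with hcdef
  set d := E 1 1 with hddef
  have r1 : a * a + b * c = a := idem_rels hE 0 0
  have r2 : a * b + b * d = b := idem_rels hE 0 1
  have r3 : c * a + d * c = c := idem_rels hE 1 0
  have r4 : c * b + d * d = d := idem_rels hE 1 1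
  obtain ⟨u, hu⟩ := ha
  set a' : R := ↑u⁻¹ with ha'def
  have haa' : a * a' = 1 := by rw [← hu]; exact u.mul_inv
  have ha'a : a' * a = 1 := by rw [← hu]; exact u.inv_mul
  set s : R := (1 - d) + c * a' * b with hsdef
  have h3' : (1 - d) * c = c * a := by
    rw [eq_sub_of_add_eq r3]; noncomm_ring
  have e1 : (1 - d) * (c * a' * b) = c * b := by
    have e0 : (1 - d) * (c * a' * b) = ((1 - d) * c) * a' * b := by noncomm_ring
    rw [e0, h3', mul_assoc c a a', haa', mul_one]
  have key : (1 - d) * s = 1 - d := by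
    have h4' : c * b = d - d * d := eq_sub_of_add_eq r4
    rw [hsdef, mul_add, e1, h4']
    noncomm_ring
  have hs : IsUnit s := by
    by_contra hns
    have hv : IsUnit (1 - s) := (local_or s).resolve_left hns
    obtain ⟨v, hv'⟩ := hv
    have hz : (1 - d) * (1 - s) = 0 := by rw [mul_sub, mul_one, key, sub_self]
    have hd : (1 : R) - d = 0 := by
      have h2 : (1 - d) * (1 - s) * (↑v⁻¹ : R) = 0 := by rw [hz, zero_mul]
      rwa [mul_assoc, ← hv', v.mul_inv, mul_one] at h2
    have hd1 : d = 1 := by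
      have := sub_eq_zero.1 hd; exact this.symm
    -- derive E = 1
    have hc0 : c = 0 := by
      have hca : c * a = 0 := by
        have h := r3; rw [hd1, one_mul] at h
        have h2 := eq_sub_of_add_eq h
        simpa using h2
      calc c = c * (a * a') := by rw [haa', mul_one]
        _ = (c * a) * a' := by rw [mul_assoc]
        _ = 0 := by rw [hca, zero_mul]
    have ha1 : a = 1 := by
      have haa : a * a = a := by
        have := r1; rw [hc0, mul_zero, add_zero] at this; exact this
      calc a = (a * a) * a' := by rw [mul_assoc, haa', mul_one]
        _ = a * a' := by rw [haa]
        _ = 1 := haa'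
    have hb0 : b = 0 := by
      have h := r2
      rw [ha1, hd1, one_mul, mul_one] at h
      have h2 := eq_sub_of_add_eq h
      simpa using h2
    exact h1 (by
      rw [Matrix.eta_fin_two E, ← hadef, ← hbdef, ← hcdef, ← hddef, ha1, hb0, hc0, hd1,
        Matrix.one_fin_two])
  obtain ⟨w, hw⟩ := hs
  -- the conjugating matrix
  have hmatch : (1 - d) - c * a' * (-b) = s := by rw [hsdef]; noncomm_ring
  have hUunit : IsUnit !![a, -b; c, 1 - d] := by
    refine isUnit_schur (σ' := (↑w⁻¹ : R)) haa' ha'a ?_ ?_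
    · rw [hmatch, ← hw]; exact w.mul_inv
    · rw [hmatch, ← hw]; exact w.inv_mul
  obtain ⟨U, hU⟩ := hUunit
  refine ⟨U, ?_⟩
  have hEU : E * U.val = U.val * !![(1:R), 0; 0, 0] := by
    rw [hU, Matrix.eta_fin_two E, ← hadef, ← hbdef, ← hcdef, ← hddef,
      Matrix.mul_fin_two, Matrix.mul_fin_two]
    apply mat2_eq
    · rw [mul_one, mul_zero, add_zero]; exact r1
    · have : a * (-b) + b * (1 - d) = b - (a * b + b * d) := by noncomm_ring
      rw [this, r2, sub_self, mul_zero, mul_zero, add_zero]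
    · rw [mul_one, mul_zero, add_zero]; exact r3
    · have : c * (-b) + d * (1 - d) = d - (c * b + d * d) := by noncomm_ring
      rw [this, r4, sub_self, mul_zero, mul_zero, add_zero]
  calc (U⁻¹).val * E * U.val = (U⁻¹).val * (E * U.val) := by rw [mul_assoc]
    _ = (U⁻¹).val * (U.val * !![(1:R), 0; 0, 0]) := by rw [hEU]
    _ = ((U⁻¹).val * U.val) * !![(1:R), 0; 0, 0] := by rw [mul_assoc]
    _ = !![(1:R), 0; 0, 0] := by rw [U.inv_mul, one_mul]

end Classify

section Classify2
variable {R : Type*} [Ring R] [IsLocalRing R]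

open Matrix

local notation "M₂" => Matrix (Fin 2) (Fin 2) R

lemma idem_eq_zero_of_nonunits (E : M₂) (hE : E * E = E)
    (hall : ∀ i j, ¬IsUnit (E i j)) : E = 0 := by
  set a := E 0 0; set b := E 0 1; set c := E 1 0; set d := E 1 1
  have hsub : (1 : M₂) - E = !![1 - a, -b; -c, 1 - d] := by
    rw [Matrix.eta_fin_two E, Matrix.one_fin_two]
    ext i j
    fin_cases i <;> fin_cases j <;> simp <;> rfl
  obtain ⟨u, hu⟩ := (local_or a).resolve_left (hall 0 0)
  have hp : (1 - a) * (↑u⁻¹ : R) = 1 := by rw [← hu]; exact u.mul_inv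
  have hp' : (↑u⁻¹ : R) * (1 - a) = 1 := by rw [← hu]; exact u.inv_mul
  have hσu : IsUnit ((1 - d) - (-c) * (↑u⁻¹ : R) * (-b)) := by
    have heq : (1 - d) - (-c) * (↑u⁻¹ : R) * (-b) = (1 - d) - c * (↑u⁻¹ : R) * b := by
      noncomm_ring
    rw [heq]
    exact local_unit_sub_nonunit ((local_or d).resolve_left (hall 1 1))
      (local_nonunit_mul_left (local_nonunit_mul_left (hall 1 0) _) _)
  obtain ⟨w, hw⟩ := hσu
  have hW : IsUnit ((1 : M₂) - E) := by
    rw [hsub]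
    refine isUnit_schur (σ' := (↑w⁻¹ : R)) hp hp' ?_ ?_
    · rw [← hw]; exact w.mul_inv
    · rw [← hw]; exact w.inv_mul
  obtain ⟨W, hWv⟩ := hW
  have h0 : E * ((1 : M₂) - E) = 0 := by rw [mul_sub, mul_one, hE, sub_self]
  have h2 : ((1 : M₂) - E) * (W⁻¹).val = 1 := by rw [← hWv]; exact W.mul_inv
  calc E = E * (((1 : M₂) - E) * (W⁻¹).val) := by rw [h2, mul_one]
    _ = (E * ((1 : M₂) - E)) * (W⁻¹).val := by rw [mul_assoc]
    _ = 0 := by rw [h0, zero_mul]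

lemma idem_corner_unit (E : M₂) (hE : E * E = E) (h0 : E ≠ 0) :
    ∃ V : M₂ˣ, IsUnit (((V⁻¹).val * E * V.val) 0 0) := by
  by_cases h00 : IsUnit (E 0 0)
  · refine ⟨1, ?_⟩
    simpa using h00
  by_cases h11 : IsUnit (E 1 1)
  · have hswap : !![(0:R), 1; 1, 0] * !![(0:R), 1; 1, 0] = 1 := by
      rw [Matrix.mul_fin_two, Matrix.one_fin_two]
      apply mat2_eq <;> simp
    refine ⟨⟨!![(0:R), 1; 1, 0], !![(0:R), 1; 1, 0], hswap, hswap⟩, ?_⟩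
    have : ((!![(0:R), 1; 1, 0] : M₂) * E * !![(0:R), 1; 1, 0]) 0 0 = E 1 1 := by
      simp [Matrix.mul_apply, Matrix.vecMul, Matrix.vecHead, Matrix.vecTail, dotProduct, Fin.sum_univ_two]
    exact this ▸ h11
  by_cases h01 : IsUnit (E 0 1)
  · obtain ⟨u, hu⟩ := h01
    set t : R := (↑u⁻¹ : R) * (1 - E 0 0) with htdef
    have hl1 : !![(1:R), 0; t, 1] * !![(1:R), 0; -t, 1] = 1 := by
      rw [Matrix.mul_fin_two, Matrix.one_fin_two]; apply mat2_eq <;> noncomm_ring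
    have hl2 : !![(1:R), 0; -t, 1] * !![(1:R), 0; t, 1] = 1 := by
      rw [Matrix.mul_fin_two, Matrix.one_fin_two]; apply mat2_eq <;> noncomm_ring
    refine ⟨⟨!![(1:R), 0; t, 1], !![(1:R), 0; -t, 1], hl1, hl2⟩, ?_⟩
    have hentry : ((!![(1:R), 0; -t, 1] : M₂) * E * !![(1:R), 0; t, 1]) 0 0
        = E 0 0 + E 0 1 * t := by
      simp [Matrix.mul_apply, Matrix.vecMul, Matrix.vecHead, Matrix.vecTail, dotProduct, Fin.sum_univ_two]
    have hval : E 0 0 + E 0 1 * t = 1 := by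
      rw [htdef, ← mul_assoc, ← hu, u.mul_inv, one_mul]
      noncomm_ring
    show IsUnit (((!![(1:R), 0; -t, 1] : M₂) * E * !![(1:R), 0; t, 1]) 0 0)
    rw [hentry, hval]
    exact isUnit_one
  by_cases h10 : IsUnit (E 1 0)
  · obtain ⟨u, hu⟩ := h10
    set t : R := (E 0 0 - 1) * (↑u⁻¹ : R) with htdef
    have hl1 : !![(1:R), t; 0, 1] * !![(1:R), -t; 0, 1] = 1 := by
      rw [Matrix.mul_fin_two, Matrix.one_fin_two]; apply mat2_eq <;> noncomm_ring
    have hl2 : !![(1:R), -t; 0, 1] * !![(1:R), t; 0, 1] = 1 := by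
      rw [Matrix.mul_fin_two, Matrix.one_fin_two]; apply mat2_eq <;> noncomm_ring
    refine ⟨⟨!![(1:R), t; 0, 1], !![(1:R), -t; 0, 1], hl1, hl2⟩, ?_⟩
    have hentry : ((!![(1:R), -t; 0, 1] : M₂) * E * !![(1:R), t; 0, 1]) 0 0
        = E 0 0 - t * E 1 0 := by
      simp [Matrix.mul_apply, Matrix.vecMul, Matrix.vecHead, Matrix.vecTail, dotProduct, Fin.sum_univ_two]
      noncomm_ring
    have hval : E 0 0 - t * E 1 0 = 1 := by
      rw [htdef, mul_assoc, ← hu, u.inv_mul, mul_one]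
      noncomm_ring
    show IsUnit (((!![(1:R), -t; 0, 1] : M₂) * E * !![(1:R), t; 0, 1]) 0 0)
    rw [hentry, hval]
    exact isUnit_one
  exfalso
  apply h0
  apply idem_eq_zero_of_nonunits E hE
  intro i j
  fin_cases i <;> fin_cases j <;> assumption

lemma idem_classify (E : M₂) (hE : E * E = E) (h0 : E ≠ 0) (h1 : E ≠ 1) :
    ∃ U : M₂ˣ, (U⁻¹).val * E * U.val = !![(1:R), 0; 0, 0] := by
  obtain ⟨V, hV⟩ := idem_corner_unit E hE h0
  have hE' := conj_idem hE V
  have hne1 : (V⁻¹).val * E * V.val ≠ 1 := by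
    intro hcon
    apply h1
    have hback : E = V.val * ((V⁻¹).val * E * V.val) * (V⁻¹).val := by
      calc E = (V.val * (V⁻¹).val) * E * (V.val * (V⁻¹).val) := by
            rw [V.mul_inv, one_mul, mul_one]
        _ = V.val * ((V⁻¹).val * E * V.val) * (V⁻¹).val := by noncomm_ring
    rw [hback, hcon, mul_one, V.mul_inv]
  obtain ⟨W, hW⟩ := idem_conj_of_corner_unit _ hE' hne1 hV
  refine ⟨V * W, ?_⟩
  rw [conj_conj]
  exact hW

end Classify2


/-- **Theorem 4.2.** Let `R` be a local ring. A matrix `A ∈ M₂(R)` is strongly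
P-clean iff `A ∈ M₂(P(R))`, or `I₂ - A ∈ M₂(P(R))`, or `A` is similar to a
diagonal matrix `diag(λ, μ)` with `λ ∈ P(R)` and `μ ∈ 1 + P(R)`. -/
theorem isStronglyPClean_matrix_iff (R : Type*) [Ring R] [IsLocalRing R]
    (A : Matrix (Fin 2) (Fin 2) R) :
    IsStronglyPClean A ↔
      ((∀ i j, A i j ∈ primeRadical R) ∨
        (∀ i j, (1 - A) i j ∈ primeRadical R) ∨
        ∃ (lam mu : R) (U : (Matrix (Fin 2) (Fin 2) R)ˣ),
          lam ∈ primeRadical R ∧ (∃ w ∈ primeRadical R, mu = 1 + w) ∧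
            (U⁻¹).val * A * U.val = !![lam, 0; 0, mu]) := by
  constructor
  · rintro ⟨E, W, hEidem, hW, hA, hcomm⟩
    have hWsn : IsStronglyNilpotent W := hW
    by_cases hE0 : E = 0
    · left
      intro i j
      have hA' : A = W := by rw [hA, hE0, zero_add]
      exact sn_entry (hA' ▸ hWsn) i j
    by_cases hE1 : E = 1
    · right; left
      intro i j
      have hA' : (1 : Matrix (Fin 2) (Fin 2) R) - A = -W := by
        rw [hA, hE1]; noncomm_ring
      rw [hA']
      exact sn_entry (sn_neg hWsn) i j
    · right; right
      obtain ⟨U, hU⟩ := idem_classify E hEidem hE0 hE1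
      have hXsn : IsStronglyNilpotent ((U⁻¹).val * W * U.val) :=
        sn_mul_right (sn_mul_left hWsn _) _
      set X : Matrix (Fin 2) (Fin 2) R := (U⁻¹).val * W * U.val with hXdef
      set F : Matrix (Fin 2) (Fin 2) R := !![(1:R), 0; 0, 0] with hFdef
      have hcomm' : F * X = X * F := by
        rw [hXdef, ← hU]
        calc ((U⁻¹).val * E * U.val) * ((U⁻¹).val * W * U.val)
            = (U⁻¹).val * (E * (U.val * (U⁻¹).val) * W) * U.val := by noncomm_ring
          _ = (U⁻¹).val * (E * W) * U.val := by rw [U.mul_inv]; noncomm_ring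
          _ = (U⁻¹).val * (W * E) * U.val := by rw [hcomm]
          _ = (U⁻¹).val * (W * (U.val * (U⁻¹).val) * E) * U.val := by
              rw [U.mul_inv]; noncomm_ring
          _ = ((U⁻¹).val * W * U.val) * ((U⁻¹).val * E * U.val) := by noncomm_ring
      have h01 : X 0 1 = 0 := by
        have h := congrFun (congrFun hcomm' 0) 1
        rw [mul_entry, mul_entry] at h
        simpa [hFdef] using h
      have h10 : X 1 0 = 0 := by
        have h := congrFun (congrFun hcomm' 1) 0
        rw [mul_entry, mul_entry] at h
        simpa [hFdef] using h.symm
      have hswap : !![(0:R), 1; 1, 0] * !![(0:R), 1; 1, 0] = 1 := by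
        rw [Matrix.mul_fin_two, Matrix.one_fin_two]
        apply mat2_eq <;> simp
      set Sw : (Matrix (Fin 2) (Fin 2) R)ˣ :=
        ⟨!![(0:R), 1; 1, 0], !![(0:R), 1; 1, 0], hswap, hswap⟩ with hSwdef
      refine ⟨X 1 1, 1 + X 0 0, U * Sw, sn_entry hXsn 1 1,
        ⟨X 0 0, sn_entry hXsn 0 0, rfl⟩, ?_⟩
      have hAU : (U⁻¹).val * A * U.val = F + X := by
        rw [hA, mul_add, add_mul, hU, ← hXdef]
      have hD : F + X = !![(1:R) + X 0 0, 0; 0, X 1 1] := by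
        ext i j
        fin_cases i <;> fin_cases j <;>
          simp [hFdef, Matrix.add_apply, h01, h10]
      rw [conj_conj, hAU, hD]
      show !![(0:R), 1; 1, 0] * _ * !![(0:R), 1; 1, 0] = _
      rw [Matrix.mul_fin_two, Matrix.mul_fin_two]
      apply mat2_eq <;> simp
  · rintro (hent | hent | ⟨lam, mu, U, hlam, ⟨w, hwP, hmu⟩, hU⟩)
    · refine ⟨0, A, ?_, sn_matrix_of_entries hent, by rw [zero_add], by rw [zero_mul, mul_zero]⟩
      show (0 : Matrix (Fin 2) (Fin 2) R) * 0 = 0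
      rw [mul_zero]
    · refine ⟨1, A - 1, ?_, ?_, by noncomm_ring, by rw [one_mul, mul_one]⟩
      · show (1 : Matrix (Fin 2) (Fin 2) R) * 1 = 1
        rw [mul_one]
      · have heq : A - 1 = -((1 : Matrix (Fin 2) (Fin 2) R) - A) := by noncomm_ring
        show IsStronglyNilpotent (A - 1)
        rw [heq]
        exact sn_neg (sn_matrix_of_entries hent)
    · set D0 : Matrix (Fin 2) (Fin 2) R := !![(0:R), 0; 0, 1] with hD0def
      set N : Matrix (Fin 2) (Fin 2) R := !![lam, 0; 0, w] with hNdef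
      have hback : A = U.val * ((U⁻¹).val * A * U.val) * (U⁻¹).val := by
        calc A = (U.val * (U⁻¹).val) * A * (U.val * (U⁻¹).val) := by
              rw [U.mul_inv, one_mul, mul_one]
          _ = U.val * ((U⁻¹).val * A * U.val) * (U⁻¹).val := by noncomm_ring
      have hsplit : !![lam, 0; 0, mu] = D0 + N := by
        ext i j
        fin_cases i <;> fin_cases j <;>
          simp [hD0def, hNdef, Matrix.add_apply, hmu]
      have hAeq : A = U.val * D0 * (U⁻¹).val + U.val * N * (U⁻¹).val := by
        rw [hback, hU, hsplit, mul_add, add_mul]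
      refine ⟨U.val * D0 * (U⁻¹).val, U.val * N * (U⁻¹).val, ?_, ?_, hAeq, ?_⟩
      · show (U.val * D0 * (U⁻¹).val) * (U.val * D0 * (U⁻¹).val) = U.val * D0 * (U⁻¹).val
        have hD0' : D0 * D0 = D0 := by
          rw [hD0def, Matrix.mul_fin_two]; apply mat2_eq <;> simp
        calc (U.val * D0 * (U⁻¹).val) * (U.val * D0 * (U⁻¹).val)
            = U.val * (D0 * ((U⁻¹).val * U.val) * D0) * (U⁻¹).val := by noncomm_ring
          _ = U.val * (D0 * D0) * (U⁻¹).val := by rw [U.inv_mul]; noncomm_ring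
          _ = U.val * D0 * (U⁻¹).val := by rw [hD0']
      · show IsStronglyNilpotent (U.val * N * (U⁻¹).val)
        have hNsn : IsStronglyNilpotent N := by
          have hNsum : N = Matrix.single 0 0 lam + Matrix.single 1 1 w := by
            ext i j
            fin_cases i <;> fin_cases j <;>
              simp [hNdef, Matrix.add_apply, Matrix.single]
          rw [hNsum]
          exact sn_add (sn_stdBasis hlam 0 0) (sn_stdBasis hwP 1 1)
        exact sn_mul_right (sn_mul_left hNsn _) _
      · have hcent : D0 * N = N * D0 := by
          rw [hD0def, hNdef, Matrix.mul_fin_two, Matrix.mul_fin_two]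
          apply mat2_eq <;> simp
        calc (U.val * D0 * (U⁻¹).val) * (U.val * N * (U⁻¹).val)
            = U.val * (D0 * ((U⁻¹).val * U.val) * N) * (U⁻¹).val := by noncomm_ring
          _ = U.val * (D0 * N) * (U⁻¹).val := by rw [U.inv_mul]; noncomm_ring
          _ = U.val * (N * D0) * (U⁻¹).val := by rw [hcent]
          _ = U.val * (N * ((U⁻¹).val * U.val) * D0) * (U⁻¹).val := by
              rw [U.inv_mul]; noncomm_ring
          _ = (U.val * N * (U⁻¹).val) * (U.val * D0 * (U⁻¹).val) := by noncomm_ring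
end
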